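/- The logic cosafetyLTL is suffix independent: for every cosafetyLTL formula φ over Σ (a pure-future NNF formula whose only temporal operators are X and U), the language of infinite-trace models of φ equals L_F(φ)·(2^Σ)^ω, where L_F(φ) is the language of finite-trace models of φ. That is, an infinite trace σ ∈ (2^Σ)^ω is a model of φ if and only if σ has a nonempty finite prefix that is a model of φ under finite-trace semantics. -/

import Mathlib

/-- LTL+P formulas in negation normal form. -/
inductive LTLP (A : Type) : Type where
  | atom : A → LTLP A
  | natom : A → LTLP A
  | and : LTLP A → LTLP A → LTLP A
  | or : LTLP A → LTLP A → LTLP A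
  | next : LTLP A → LTLP A            -- X
  | wnext : LTLP A → LTLP A           -- wX
  | until_ : LTLP A → LTLP A → LTLP A -- U
  | release : LTLP A → LTLP A → LTLP A -- R
  | yest : LTLP A → LTLP A            -- Y
  | wyest : LTLP A → LTLP A           -- wY
  | since : LTLP A → LTLP A → LTLP A  -- S
  | trig : LTLP A → LTLP A → LTLP A   -- T

variable {A : Type}

/-- Satisfaction of an LTL+P formula at position `i` of a finite trace `σ`. -/
def finSat (σ : List (Set A)) : LTLP A → ℕ → Prop
  | .atom p, i => p ∈ σ.getD i ∅
  | .natom p, i => p ∉ σ.getD i ∅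
  | .and φ ψ, i => finSat σ φ i ∧ finSat σ ψ i
  | .or φ ψ, i => finSat σ φ i ∨ finSat σ ψ i
  | .next φ, i => i + 1 < σ.length ∧ finSat σ φ (i+1)
  | .wnext φ, i => i + 1 = σ.length ∨ finSat σ φ (i+1)
  | .until_ φ ψ, i => ∃ j, i ≤ j ∧ j < σ.length ∧ finSat σ ψ j ∧
      ∀ k, i ≤ k → k < j → finSat σ φ k
  | .release φ ψ, i => (∀ j, i ≤ j → j < σ.length → finSat σ ψ j) ∨
      ∃ k, i ≤ k ∧ k < σ.length ∧ finSat σ φ k ∧ ∀ j, i ≤ j → j ≤ k → finSat σ ψ j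
  | .yest φ, i => 0 < i ∧ finSat σ φ (i-1)
  | .wyest φ, i => i = 0 ∨ finSat σ φ (i-1)
  | .since φ ψ, i => ∃ j, j ≤ i ∧ finSat σ ψ j ∧ ∀ k, j < k → k ≤ i → finSat σ φ k
  | .trig φ ψ, i => (∀ j, j ≤ i → finSat σ ψ j) ∨
      ∃ k, k ≤ i ∧ finSat σ φ k ∧ ∀ j, k ≤ j → j ≤ i → finSat σ ψ j

/-- Satisfaction of an LTL+P formula at position `i` of an infinite trace `σ`. -/
def infSat (σ : ℕ → Set A) : LTLP A → ℕ → Prop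
  | .atom p, i => p ∈ σ i
  | .natom p, i => p ∉ σ i
  | .and φ ψ, i => infSat σ φ i ∧ infSat σ ψ i
  | .or φ ψ, i => infSat σ φ i ∨ infSat σ ψ i
  | .next φ, i => infSat σ φ (i+1)
  | .wnext φ, i => infSat σ φ (i+1)
  | .until_ φ ψ, i => ∃ j, i ≤ j ∧ infSat σ ψ j ∧ ∀ k, i ≤ k → k < j → infSat σ φ k
  | .release φ ψ, i => (∀ j, i ≤ j → infSat σ ψ j) ∨
      ∃ k, i ≤ k ∧ infSat σ φ k ∧ ∀ j, i ≤ j → j ≤ k → infSat σ ψ j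
  | .yest φ, i => 0 < i ∧ infSat σ φ (i-1)
  | .wyest φ, i => i = 0 ∨ infSat σ φ (i-1)
  | .since φ ψ, i => ∃ j, j ≤ i ∧ infSat σ ψ j ∧ ∀ k, j < k → k ≤ i → infSat σ φ k
  | .trig φ ψ, i => (∀ j, j ≤ i → infSat σ ψ j) ∨
      ∃ k, k ≤ i ∧ infSat σ φ k ∧ ∀ j, k ≤ j → j ≤ i → infSat σ ψ j

/-- Pure-future formulas: no past operators. -/
def pureFuture : LTLP A → Prop
  | .atom _ | .natom _ => True
  | .and φ ψ | .or φ ψ | .until_ φ ψ | .release φ ψ => pureFuture φ ∧ pureFuture ψ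
  | .next φ | .wnext φ => pureFuture φ
  | .yest _ | .wyest _ | .since _ _ | .trig _ _ => False

/-- Pure-past formulas: no future operators. -/
def purePast : LTLP A → Prop
  | .atom _ | .natom _ => True
  | .and φ ψ | .or φ ψ | .since φ ψ | .trig φ ψ => purePast φ ∧ purePast ψ
  | .yest φ | .wyest φ => purePast φ
  | .next _ | .wnext _ | .until_ _ _ | .release _ _ => False

/-- safetyLTL: pure-future NNF formulas whose only temporal operators are wX and R. -/
def isSafetyLTL : LTLP A → Prop
  | .atom _ | .natom _ => True
  | .and φ ψ | .or φ ψ | .release φ ψ => isSafetyLTL φ ∧ isSafetyLTL ψ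
  | .wnext φ => isSafetyLTL φ
  | .next _ | .until_ _ _ | .yest _ | .wyest _ | .since _ _ | .trig _ _ => False

/-- cosafetyLTL: pure-future NNF formulas whose only temporal operators are X and U. -/
def isCosafetyLTL : LTLP A → Prop
  | .atom _ | .natom _ => True
  | .and φ ψ | .or φ ψ | .until_ φ ψ => isCosafetyLTL φ ∧ isCosafetyLTL ψ
  | .next φ => isCosafetyLTL φ
  | .wnext _ | .release _ _ | .yest _ | .wyest _ | .since _ _ | .trig _ _ => False

/-- ⊥ := p ∧ ¬p (for some proposition letter p). -/
def LTLP.fls (p : A) : LTLP A := .and (.atom p) (.natom p)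
/-- ⊤ := p ∨ ¬p (for some proposition letter p). -/
def LTLP.tru (p : A) : LTLP A := .or (.atom p) (.natom p)
/-- G φ := ⊥ R φ. -/
def LTLP.G (p : A) (φ : LTLP A) : LTLP A := .release (LTLP.fls p) φ
/-- F φ := ⊤ U φ. -/
def LTLP.F (p : A) (φ : LTLP A) : LTLP A := .until_ (LTLP.tru p) φ

/-- Relabelling of proposition letters. -/
def LTLP.map {A B : Type} (h : A → B) : LTLP A → LTLP B
  | .atom p => .atom (h p)
  | .natom p => .natom (h p)
  | .and φ ψ => .and (φ.map h) (ψ.map h)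
  | .or φ ψ => .or (φ.map h) (ψ.map h)
  | .next φ => .next (φ.map h)
  | .wnext φ => .wnext (φ.map h)
  | .until_ φ ψ => .until_ (φ.map h) (ψ.map h)
  | .release φ ψ => .release (φ.map h) (ψ.map h)
  | .yest φ => .yest (φ.map h)
  | .wyest φ => .wyest (φ.map h)
  | .since φ ψ => .since (φ.map h) (ψ.map h)
  | .trig φ ψ => .trig (φ.map h) (ψ.map h)

/-- The translation f over the alphabet extended with the fresh letter `endt`
(encoded as `none`, with letters of Σ encoded as `some p`). -/
def ftr : LTLP A → LTLP (Option A)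
  | .atom p => .atom (some p)
  | .natom p => .natom (some p)
  | .and φ ψ => .and (ftr φ) (ftr ψ)
  | .or φ ψ => .or (ftr φ) (ftr ψ)
  | .next φ => .next (.and (.natom none) (ftr φ))
  | .wnext φ => .next (.or (.atom none) (ftr φ))  -- X(¬endt → f φ)
  | .until_ φ ψ => .until_ (ftr φ) (.and (.natom none) (ftr ψ))
  | .release φ ψ => .or (.until_ (ftr ψ) (.and (ftr ψ) (.next (.atom none))))
      (.until_ (ftr ψ) (.and (ftr φ) (ftr ψ)))
  | .yest φ => .yest (ftr φ)
  | .wyest φ => .wyest (ftr φ)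
  | .since φ ψ => .since (ftr φ) (ftr ψ)
  | .trig φ ψ => .trig (ftr φ) (ftr ψ)

/-- g(φ) := ¬endt ∧ f(φ) ∧ ((¬endt) U endt). -/
def gtr (φ : LTLP A) : LTLP (Option A) :=
  .and (.natom none) (.and (ftr φ) (.until_ (.natom none) (.atom none)))

/-- The outcome trace res(s,𝒰) of a (Mealy, Environment-first) strategy. -/
def resTr {C U : Type} (s : List (Set U) → Set C) (env : ℕ → Set U) : ℕ → Set (C ⊕ U) :=
  fun i => Sum.elim (fun c => c ∈ s ((List.range (i+1)).map env)) (fun u => u ∈ env i)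

/-- Realizability over infinite traces. -/
def RealizableInf {C U : Type} (φ : LTLP (C ⊕ U)) : Prop :=
  ∃ s : List (Set U) → Set C, ∀ env : ℕ → Set U, infSat (resTr s env) φ 0

/-- Realizability over finite traces. -/
def RealizableFin {C U : Type} (φ : LTLP (C ⊕ U)) : Prop :=
  ∃ s : List (Set U) → Set C, ∀ env : ℕ → Set U, ∃ k : ℕ,
    finSat ((List.range (k+1)).map (resTr s env)) φ 0

lemma pre_getD {A : Type} (σ : ℕ → Set A) {n i : ℕ} (h : i < n) :
    ((List.range n).map σ).getD i ∅ = σ i := by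
  have hl : i < ((List.range n).map σ).length := by simpa using h
  rw [List.getD_eq_getElem _ _ hl]
  simp

lemma cosafety_mono {A : Type} (σ : ℕ → Set A) :
    ∀ φ : LTLP A, isCosafetyLTL φ → ∀ n m i, n ≤ m → i < n →
      finSat ((List.range n).map σ) φ i → finSat ((List.range m).map σ) φ i := by
  intro φ
  induction φ with
  | atom p =>
    intro _ n m i hnm hin hs
    simp only [finSat] at hs ⊢
    rwa [pre_getD σ (lt_of_lt_of_le hin hnm), ← pre_getD σ hin]
  | natom p =>
    intro _ n m i hnm hin hs
    simp only [finSat] at hs ⊢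
    rwa [pre_getD σ (lt_of_lt_of_le hin hnm), ← pre_getD σ hin]
  | and φ ψ ihφ ihψ =>
    intro h n m i hnm hin hs
    exact ⟨ihφ h.1 n m i hnm hin hs.1, ihψ h.2 n m i hnm hin hs.2⟩
  | or φ ψ ihφ ihψ =>
    intro h n m i hnm hin hs
    exact hs.elim (fun hs => Or.inl (ihφ h.1 n m i hnm hin hs))
      (fun hs => Or.inr (ihψ h.2 n m i hnm hin hs))
  | next φ ih =>
    intro h n m i hnm hin hs
    simp only [finSat, List.length_map, List.length_range] at hs ⊢
    exact ⟨lt_of_lt_of_le hs.1 hnm, ih h n m (i+1) hnm hs.1 hs.2⟩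
  | until_ φ ψ ihφ ihψ =>
    intro h n m i hnm hin hs
    simp only [finSat, List.length_map, List.length_range] at hs ⊢
    obtain ⟨j, hij, hjn, hψ, hφ⟩ := hs
    exact ⟨j, hij, lt_of_lt_of_le hjn hnm, ihψ h.2 n m j hnm hjn hψ,
      fun k hik hkj => ihφ h.1 n m k hnm (lt_trans hkj hjn) (hφ k hik hkj)⟩
  | wnext φ _ => intro h; exact h.elim
  | release φ ψ _ _ => intro h; exact h.elim
  | yest φ _ => intro h; exact h.elim
  | wyest φ _ => intro h; exact h.elim
  | since φ ψ _ _ => intro h; exact h.elim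
  | trig φ ψ _ _ => intro h; exact h.elim

lemma cosafety_fin_to_inf {A : Type} (σ : ℕ → Set A) :
    ∀ φ : LTLP A, isCosafetyLTL φ → ∀ n i, i < n →
      finSat ((List.range n).map σ) φ i → infSat σ φ i := by
  intro φ
  induction φ with
  | atom p =>
    intro _ n i hin hs
    simp only [finSat] at hs
    rwa [pre_getD σ hin] at hs
  | natom p =>
    intro _ n i hin hs
    simp only [finSat] at hs
    rwa [pre_getD σ hin] at hs
  | and φ ψ ihφ ihψ =>
    intro h n i hin hs
    exact ⟨ihφ h.1 n i hin hs.1, ihψ h.2 n i hin hs.2⟩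
  | or φ ψ ihφ ihψ =>
    intro h n i hin hs
    exact hs.elim (fun hs => Or.inl (ihφ h.1 n i hin hs))
      (fun hs => Or.inr (ihψ h.2 n i hin hs))
  | next φ ih =>
    intro h n i hin hs
    simp only [finSat, List.length_map, List.length_range] at hs
    exact ih h n (i+1) hs.1 hs.2
  | until_ φ ψ ihφ ihψ =>
    intro h n i hin hs
    simp only [finSat, List.length_map, List.length_range] at hs
    obtain ⟨j, hij, hjn, hψ, hφ⟩ := hs
    exact ⟨j, hij, ihψ h.2 n j hjn hψ,
      fun k hik hkj => ihφ h.1 n k (lt_trans hkj hjn) (hφ k hik hkj)⟩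
  | wnext φ _ => intro h; exact h.elim
  | release φ ψ _ _ => intro h; exact h.elim
  | yest φ _ => intro h; exact h.elim
  | wyest φ _ => intro h; exact h.elim
  | since φ ψ _ _ => intro h; exact h.elim
  | trig φ ψ _ _ => intro h; exact h.elim

lemma cosafety_inf_to_fin {A : Type} (σ : ℕ → Set A) :
    ∀ φ : LTLP A, isCosafetyLTL φ → ∀ i, infSat σ φ i →
      ∃ n, i < n ∧ finSat ((List.range n).map σ) φ i := by
  intro φ
  induction φ with
  | atom p =>
    intro _ i hs
    exact ⟨i+1, Nat.lt_succ_self i, by simpa [finSat, infSat, pre_getD σ (Nat.lt_succ_self i)] using hs⟩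
  | natom p =>
    intro _ i hs
    exact ⟨i+1, Nat.lt_succ_self i, by simpa [finSat, infSat, pre_getD σ (Nat.lt_succ_self i)] using hs⟩
  | and φ ψ ihφ ihψ =>
    intro h i hs
    obtain ⟨n₁, hn₁, h₁⟩ := ihφ h.1 i hs.1
    obtain ⟨n₂, hn₂, h₂⟩ := ihψ h.2 i hs.2
    exact ⟨max n₁ n₂, lt_of_lt_of_le hn₁ (le_max_left _ _),
      cosafety_mono σ φ h.1 n₁ _ i (le_max_left _ _) hn₁ h₁,
      cosafety_mono σ ψ h.2 n₂ _ i (le_max_right _ _) hn₂ h₂⟩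
  | or φ ψ ihφ ihψ =>
    intro h i hs
    rcases hs with hs | hs
    · obtain ⟨n, hn, h₁⟩ := ihφ h.1 i hs
      exact ⟨n, hn, Or.inl h₁⟩
    · obtain ⟨n, hn, h₁⟩ := ihψ h.2 i hs
      exact ⟨n, hn, Or.inr h₁⟩
  | next φ ih =>
    intro h i hs
    obtain ⟨n, hn, h₁⟩ := ih h (i+1) hs
    refine ⟨n, Nat.lt_of_succ_lt hn, ?_⟩
    simp only [finSat, List.length_map, List.length_range]
    exact ⟨hn, h₁⟩
  | until_ φ ψ ihφ ihψ =>
    intro h i hs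
    obtain ⟨j, hij, hψ, hφ⟩ := hs
    obtain ⟨nψ, hnψ, hψf⟩ := ihψ h.2 j hψ
    have H : ∀ k, ∃ n, i ≤ k → k < j → k < n ∧ finSat ((List.range n).map σ) φ k := by
      intro k
      by_cases hk : i ≤ k ∧ k < j
      · obtain ⟨n, hn, hf⟩ := ihφ h.1 k (hφ k hk.1 hk.2)
        exact ⟨n, fun _ _ => ⟨hn, hf⟩⟩
      · exact ⟨0, fun h1 h2 => absurd ⟨h1, h2⟩ hk⟩
    choose f hf using H
    set N := max nψ ((Finset.range j).sup f) with hN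
    have hnψN : nψ ≤ N := le_max_left _ _
    have hjN : j < N := lt_of_lt_of_le hnψ hnψN
    refine ⟨N, lt_of_le_of_lt hij hjN, ?_⟩
    simp only [finSat, List.length_map, List.length_range]
    refine ⟨j, hij, hjN, cosafety_mono σ ψ h.2 nψ N j hnψN hnψ hψf, ?_⟩
    intro k hik hkj
    obtain ⟨hkf, hff⟩ := hf k hik hkj
    have hfN : f k ≤ N :=
      le_trans (Finset.le_sup (Finset.mem_range.mpr hkj)) (le_max_right _ _)
    exact cosafety_mono σ φ h.1 (f k) N k hfN hkf hff
  | wnext φ _ => intro h; exact h.elim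
  | release φ ψ _ _ => intro h; exact h.elim
  | yest φ _ => intro h; exact h.elim
  | wyest φ _ => intro h; exact h.elim
  | since φ ψ _ _ => intro h; exact h.elim
  | trig φ ψ _ _ => intro h; exact h.elim

/-- cosafetyLTL is suffix independent: an infinite trace is a model of a
cosafetyLTL formula iff some nonempty finite prefix of it is a model. -/
theorem stmt7 {Sigma : Type} [Fintype Sigma] (φ : LTLP Sigma) (hφ : isCosafetyLTL φ)
    (σ : ℕ → Set Sigma) :
    infSat σ φ 0 ↔ ∃ k : ℕ, finSat ((List.range (k+1)).map σ) φ 0 := by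
  constructor
  · intro hs
    obtain ⟨n, hn, hf⟩ := cosafety_inf_to_fin σ φ hφ 0 hs
    refine ⟨n - 1, ?_⟩
    rwa [Nat.sub_add_cancel hn]
  · rintro ⟨k, hf⟩
    exact cosafety_fin_to_inf σ φ hφ (k+1) 0 (Nat.succ_pos k) hf
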